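/- For every starting index i at which some occurrence of a serial episode α begins, there is exactly one earliest transiting occurrence of α beginning at i, and it satisfies h^e(v_j) ≤ h(v_j) for all j and every occurrence h of α with h(v_1) = i. -/

import Mathlib

variable {A : Type}

/-- An occurrence of the (N+1)-node serial episode `α` in the event sequence
`E` (of length `n`): a strictly increasing index map matching the event-types. -/
def IsOcc (E : ℕ → A) (n : ℕ) {N : ℕ} (α : Fin (N+1) → A) (h : Fin (N+1) → ℕ) : Prop :=
  StrictMono h ∧ (∀ i, h i < n) ∧ (∀ i, E (h i) = α i)

/-- Earliest transiting occurrence: each `h i.succ` is the least index after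
`h i.castSucc` carrying event-type `α i.succ`. -/
def IsET (E : ℕ → A) (n : ℕ) {N : ℕ} (α : Fin (N+1) → A) (h : Fin (N+1) → ℕ) : Prop :=
  IsOcc E n α h ∧ ∀ (i : Fin N) (j : ℕ), h i.castSucc < j → E j = α i.succ → h i.succ ≤ j

/-- Lexicographic order on occurrences. -/
def OccLex {N : ℕ} (h1 h2 : Fin (N+1) → ℕ) : Prop :=
  ∃ i, (∀ k < i, h1 k = h2 k) ∧ h1 i < h2 i

/-- The window `[a, b]` contains an occurrence of `α`. -/
def WindowHasOcc (E : ℕ → A) (n : ℕ) {N : ℕ} (α : Fin (N+1) → A) (a b : ℕ) : Prop :=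
  ∃ h, IsOcc E n α h ∧ a ≤ h 0 ∧ h (Fin.last N) ≤ b

/-- `[a, b]` is a minimal window of `α`: it contains an occurrence and no
proper subwindow contains one. -/
def IsMinWindow (E : ℕ → A) (n : ℕ) {N : ℕ} (α : Fin (N+1) → A) (a b : ℕ) : Prop :=
  WindowHasOcc E n α a b ∧
    ∀ c d, a ≤ c → d ≤ b → (a < c ∨ d < b) → ¬ WindowHasOcc E n α c d

/-- A minimal occurrence: its window is a minimal window. -/
def IsMinOcc (E : ℕ → A) (n : ℕ) {N : ℕ} (α : Fin (N+1) → A) (h : Fin (N+1) → ℕ) : Prop :=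
  IsOcc E n α h ∧ IsMinWindow E n α (h 0) (h (Fin.last N))

/-- `h'` is the earliest transiting occurrence immediately following `h`
in the lexicographic enumeration of earliest transiting occurrences. -/
def NextET (E : ℕ → A) (n : ℕ) {N : ℕ} (α : Fin (N+1) → A) (h h' : Fin (N+1) → ℕ) : Prop :=
  IsET E n α h ∧ IsET E n α h' ∧ OccLex h h' ∧
    ¬ ∃ g, IsET E n α g ∧ OccLex h g ∧ OccLex g h'

/-- `h1 <⋆ h2` are non-interleaved: `h2 (v_j) ≥ h1 (v_{j+1})` for all `j < N`. -/
def NonInterleaved {N : ℕ} (h1 h2 : Fin (N+1) → ℕ) : Prop :=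
  ∀ i : Fin N, h1 i.succ ≤ h2 i.castSucc

/-- Non-overlapped occurrences: one ends strictly before the other begins. -/
def NonOverlapped {N : ℕ} (h1 h2 : Fin (N+1) → ℕ) : Prop :=
  h1 (Fin.last N) < h2 0 ∨ h2 (Fin.last N) < h1 0


open Fin.NatCast

noncomputable def etAux (E : ℕ → A) {N : ℕ} (α : Fin (N+1) → A) (i : ℕ) : ℕ → ℕ
  | 0 => i
  | (j+1) => sInf {k | etAux E α i j < k ∧ E k = α ((j+1 : ℕ) : Fin (N+1))}

lemma fin_cast_eq {N m : ℕ} (h : m < N + 1) : ((m : ℕ) : Fin (N+1)) = ⟨m, h⟩ :=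
  Fin.ext (Nat.mod_eq_of_lt h)

lemma etAux_spec (E : ℕ → A) (n : ℕ) {N : ℕ} (α : Fin (N+1) → A) (i : ℕ)
    (h0 : Fin (N+1) → ℕ) (h0occ : IsOcc E n α h0) (h00 : h0 0 = i) :
    ∀ m (hm : m ≤ N),
      E (etAux E α i m) = α ⟨m, Nat.lt_succ_of_le hm⟩ ∧
      (∀ h, IsOcc E n α h → h 0 = i → etAux E α i m ≤ h ⟨m, Nat.lt_succ_of_le hm⟩) ∧
      (0 < m → etAux E α i (m-1) < etAux E α i m) := by
  intro m
  induction m with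
  | zero =>
    intro _
    refine ⟨?_, ?_, by omega⟩
    · have := h0occ.2.2 0
      rw [h00] at this
      simpa [etAux] using this
    · intro h hocc h0i
      have : (⟨0, by omega⟩ : Fin (N+1)) = 0 := rfl
      rw [this, h0i, ← h00]
      exact le_of_eq rfl
  | succ m ih =>
    intro hm
    have hmN : m ≤ N := Nat.le_of_succ_le hm
    obtain ⟨ihE, ihle, _⟩ := ih hmN
    have hcast : ((m+1 : ℕ) : Fin (N+1)) = ⟨m+1, Nat.lt_succ_of_le hm⟩ :=
      fin_cast_eq _
    -- the set is nonempty
    have hmem : ∀ h, IsOcc E n α h → h 0 = i →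
        h ⟨m+1, Nat.lt_succ_of_le hm⟩ ∈
          {k | etAux E α i m < k ∧ E k = α ((m+1 : ℕ) : Fin (N+1))} := by
      intro h hocc h0i
      constructor
      · exact lt_of_le_of_lt (ihle h hocc h0i)
          (hocc.1 (show (⟨m, Nat.lt_succ_of_le hmN⟩ : Fin (N+1)) < ⟨m+1, _⟩ by
            simp [Fin.lt_def]))
      · rw [hcast]; exact hocc.2.2 _
    have hne : {k | etAux E α i m < k ∧ E k = α ((m+1 : ℕ) : Fin (N+1))}.Nonempty :=
      ⟨_, hmem h0 h0occ h00⟩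
    have hdef : etAux E α i (m+1) ∈
        {k | etAux E α i m < k ∧ E k = α ((m+1 : ℕ) : Fin (N+1))} := by
      show sInf _ ∈ _
      exact Nat.sInf_mem hne
    refine ⟨?_, ?_, ?_⟩
    · have := hdef.2
      rwa [hcast] at this
    · intro h hocc h0i
      exact Nat.sInf_le (hmem h hocc h0i)
    · intro _
      simpa using hdef.1

lemma etAux_le (E : ℕ → A) {N : ℕ} (α : Fin (N+1) → A) (i : ℕ) (m j : ℕ)
    (hlt : etAux E α i m < j) (hE : E j = α ((m+1 : ℕ) : Fin (N+1))) :
    etAux E α i (m+1) ≤ j :=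
  Nat.sInf_le ⟨hlt, hE⟩

theorem stmt17 (E : ℕ → A) (n : ℕ) {N : ℕ} (α : Fin (N+1) → A) (i : ℕ)
    (hstart : ∃ h, IsOcc E n α h ∧ h 0 = i) :
    (∃! he : Fin (N+1) → ℕ, IsET E n α he ∧ he 0 = i) ∧
    ∀ he, IsET E n α he → he 0 = i →
      ∀ h, IsOcc E n α h → h 0 = i → ∀ j, he j ≤ h j := by
  obtain ⟨h0, h0occ, h00⟩ := hstart
  have key : ∀ he, IsET E n α he → he 0 = i →
      ∀ h, IsOcc E n α h → h 0 = i → ∀ j, he j ≤ h j := by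
    rintro he ⟨⟨hemono, hen, heE⟩, heET⟩ he0 h hocc h0eq j
    induction j using Fin.induction with
    | zero => rw [he0, h0eq]
    | succ k ih =>
      exact heET k (h k.succ) (lt_of_le_of_lt ih (hocc.1 ((Fin.castSucc_lt_succ (i := k)))))
        (hocc.2.2 k.succ)
  -- the constructed ET occurrence
  set he : Fin (N+1) → ℕ := fun j => etAux E α i j.val with hhe
  have spec := etAux_spec E n α i h0 h0occ h00
  have hincr : ∀ a b, a < b → b ≤ N → etAux E α i a < etAux E α i b := by
    intro a b hab hbN
    induction b with
    | zero => omega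
    | succ b ihb =>
      have hlt := (spec (b+1) hbN).2.2 (by omega)
      simp only [Nat.add_sub_cancel] at hlt
      rcases Nat.lt_or_ge a b with h' | h'
      · exact lt_trans (ihb h' (by omega)) hlt
      · have : a = b := by omega
        subst this; exact hlt
  have heocc : IsOcc E n α he := by
    refine ⟨?_, ?_, ?_⟩
    · intro a b hab
      exact hincr a.val b.val hab (Nat.lt_succ_iff.mp b.isLt)
    · intro j
      exact lt_of_le_of_lt
        ((spec j.val (Nat.lt_succ_iff.mp j.isLt)).2.1 h0 h0occ h00) (h0occ.2.1 _)
    · intro j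
      have := (spec j.val (Nat.lt_succ_iff.mp j.isLt)).1
      simpa using this
  have heET : IsET E n α he := by
    refine ⟨heocc, ?_⟩
    intro k j hlt hE
    have hc : ((k.val + 1 : ℕ) : Fin (N+1)) = k.succ := by
      rw [fin_cast_eq (by omega)]
      exact Fin.ext rfl
    have := etAux_le E α i k.val j hlt (by rw [hc]; exact hE)
    simpa [hhe, Fin.val_succ] using this
  have he0 : he 0 = i := rfl
  constructor
  · refine ⟨he, ⟨heET, he0⟩, ?_⟩
    rintro g ⟨gET, g0⟩
    funext j
    exact le_antisymm (key g gET g0 he heocc he0 j) (key he heET he0 g gET.1 g0 j)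
  · exact key
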